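/- For every real δ, the function d ↦ K(δ,d), where K is the piecewise kernel K(δ,d)=e^{−|d|} for (d<0, δ≤d) or (d>0, δ>d), K(δ,d)=e^{−|d|−(δ−d)} for (d<0, δ>d), and K(δ,d)=e^{−|d|−(d−δ)} for (d>0, δ≤d), is a probability density: it is nonnegative and its integral over ℝ equals 1. -/

import Mathlib

open Real MeasureTheory

/-- The piecewise transition kernel (the value at `d = 0` is irrelevant for the integral). -/
noncomputable def Kker (δ d : ℝ) : ℝ :=
  if d < 0 then (if δ ≤ d then exp (-|d|) else exp (-|d| - (δ - d)))
  else if d = 0 then exp (-|δ|)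
  else if δ ≤ d then exp (-|d| - (d - δ))
  else exp (-|d|)

open Set Filter in
lemma intOn_Iic_aux (b c : ℝ) : IntegrableOn (fun x : ℝ => exp (2*x + c)) (Iic b) := by
  refine Integrable.mono ((integrableOn_exp_Iic b).const_mul (exp (b + c))) ?_ ?_
  · exact (Real.continuous_exp.comp (by continuity)).aestronglyMeasurable
  · filter_upwards [ae_restrict_mem measurableSet_Iic] with x hx
    simp only [Real.norm_eq_abs, abs_of_nonneg (exp_pos _).le, abs_of_nonneg
      (mul_nonneg (exp_pos _).le (exp_pos _).le), ← exp_add]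
    exact exp_le_exp.2 (by simp only [mem_Iic] at hx; linarith)

open Set Filter Topology in
lemma int_Iic_aux (b c : ℝ) : ∫ x in Iic b, exp (2*x + c) = exp (2*b + c) / 2 := by
  have hderiv : ∀ x ∈ Iic b, HasDerivAt (fun y : ℝ => exp (2*y + c) / 2) (exp (2*x + c)) x := by
    intro x _
    have h1 : HasDerivAt (fun y : ℝ => 2*y + c) 2 x := by
      simpa using ((hasDerivAt_id x).const_mul 2).add_const c
    have h2 := (h1.exp).div_const 2
    convert h2 using 1
    · rfl
    · rfl
    · ring
  have htend : Tendsto (fun y : ℝ => exp (2*y + c) / 2) atBot (𝓝 0) := by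
    have h1 : Tendsto (fun y : ℝ => 2*y + c) atBot atBot := by
      apply tendsto_atBot_add_const_right
      exact (tendsto_const_mul_atBot_of_pos two_pos).2 tendsto_id
    simpa using (tendsto_exp_atBot.comp h1).div_const 2
  have := integral_Iic_of_hasDerivAt_of_tendsto' hderiv (intOn_Iic_aux b c) htend
  simpa using this

open Set Filter in
lemma intOn_Ioi_aux (a c : ℝ) : IntegrableOn (fun x : ℝ => exp (-(2*x) + c)) (Ioi a) := by
  have h := (exp_neg_integrableOn_Ioi a (by norm_num : (0:ℝ) < 2)).const_mul (exp c)
  refine IntegrableOn.congr_fun h (fun x _ => ?_) measurableSet_Ioi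
  rw [← exp_add]; ring_nf

open Set Filter in
lemma int_Ioi_aux (a c : ℝ) : ∫ x in Ioi a, exp (-(2*x) + c) = exp (-(2*a) + c) / 2 := by
  have key : ∀ x : ℝ, -(2*x) + c = 2*(-x) + c := fun x => by ring
  simp_rw [key]
  rw [integral_comp_neg_Ioi a (fun x => exp (2*x + c)), int_Iic_aux]

open Set Filter in
lemma int_Ioc_exp (a b : ℝ) (hab : a ≤ b) : ∫ x in Ioc a b, exp x = exp b - exp a := by
  rw [← intervalIntegral.integral_of_le hab, integral_exp]

open Set Filter in
lemma int_Ioc_exp_neg (a b : ℝ) (hab : a ≤ b) :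
    ∫ x in Ioc a b, exp (-x) = exp (-a) - exp (-b) := by
  rw [← intervalIntegral.integral_of_le hab,
    intervalIntegral.integral_comp_neg (fun x => exp x), integral_exp]

/-- For every `δ`, `d ↦ K(δ,d)` is a probability density: nonnegative with total integral 1. -/
theorem Kker_probability_density (δ : ℝ) :
    (∀ d : ℝ, 0 ≤ Kker δ d) ∧ (∫ d : ℝ, Kker δ d = 1) := by
  constructor
  · intro d
    unfold Kker
    split_ifs <;> exact (exp_pos _).le
  · rcases le_or_gt δ 0 with hδ | hδ
    · -- case δ ≤ 0
      set g : ℝ → ℝ := fun d =>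
        if d ≤ δ then exp (2*d + (-δ)) else if d ≤ 0 then exp d else exp (-(2*d) + δ) with hg
      have hE1 : Set.EqOn g (fun d => exp (2*d + (-δ))) (Set.Iic δ) := by
        intro d hd
        simp only [hg, if_pos (Set.mem_Iic.1 hd)]
      have hE2 : Set.EqOn g (fun d => exp d) (Set.Ioc δ 0) := by
        intro d hd
        simp only [hg, if_neg (not_le.2 hd.1), if_pos hd.2]
      have hE3 : Set.EqOn g (fun d => exp (-(2*d) + δ)) (Set.Ioi 0) := by
        intro d hd
        have hd' : (0:ℝ) < d := hd
        simp only [hg, if_neg (not_le.2 (hδ.trans_lt hd')), if_neg (not_le.2 hd')]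
      have hae : (fun d => Kker δ d) =ᵐ[volume] g := by
        have h0 : (volume : Measure ℝ) {(0:ℝ)} = 0 := measure_singleton 0
        filter_upwards [compl_mem_ae_iff.2 h0] with d hd
        simp only [Set.mem_compl_iff, Set.mem_singleton_iff] at hd
        unfold Kker
        simp only [hg]
        rcases lt_trichotomy d 0 with hdlt | hdeq | hdgt
        · rw [if_pos hdlt, abs_of_neg hdlt]
          rcases le_or_gt d δ with h1 | h1
          · rcases eq_or_lt_of_le h1 with rfl | h1'
            · rw [if_pos le_rfl, if_pos le_rfl]
              ring_nf
            · rw [if_neg (not_le.2 h1'), if_pos h1]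
              ring_nf
          · rw [if_pos h1.le, if_neg (not_le.2 h1), if_pos hdlt.le]
            ring_nf
        · exact absurd hdeq hd
        · rw [if_neg (not_lt.2 hdgt.le), if_neg (ne_of_gt hdgt), abs_of_pos hdgt,
            if_pos (hδ.trans hdgt.le), if_neg (not_le.2 (hδ.trans_lt hdgt)),
            if_neg (not_le.2 hdgt)]
          ring_nf
      rw [integral_congr_ae hae]
      have hI1 : IntegrableOn g (Set.Iic δ) :=
        (intOn_Iic_aux δ (-δ)).congr_fun (fun d hd => (hE1 hd).symm) measurableSet_Iic
      have hI2 : IntegrableOn g (Set.Ioc δ 0) :=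
        ((integrableOn_exp_Iic (0:ℝ)).mono_set Set.Ioc_subset_Iic_self).congr_fun
          (fun d hd => (hE2 hd).symm) measurableSet_Ioc
      have hI3 : IntegrableOn g (Set.Ioi (0:ℝ)) :=
        (intOn_Ioi_aux 0 δ).congr_fun (fun d hd => (hE3 hd).symm) measurableSet_Ioi
      have hsplit2 : Set.Ioc δ 0 ∪ Set.Ioi (0:ℝ) = Set.Ioi δ := Set.Ioc_union_Ioi_eq_Ioi hδ
      have hIoi : IntegrableOn g (Set.Ioi δ) := by
        rw [← hsplit2]; exact hI2.union hI3
      rw [← intervalIntegral.integral_Iic_add_Ioi hI1 hIoi, ← hsplit2,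
        setIntegral_union Set.Ioc_disjoint_Ioi_same measurableSet_Ioi hI2 hI3,
        setIntegral_congr_fun measurableSet_Iic hE1,
        setIntegral_congr_fun measurableSet_Ioc hE2,
        setIntegral_congr_fun measurableSet_Ioi hE3,
        int_Iic_aux, int_Ioc_exp δ 0 hδ, int_Ioi_aux]
      simp only [exp_zero]
      have : 2*δ + (-δ) = δ := by ring
      rw [this]
      have : -(2*(0:ℝ)) + δ = δ := by ring
      rw [this]
      ring
    · -- case 0 < δ
      set g : ℝ → ℝ := fun d =>
        if δ ≤ d then exp (-(2*d) + δ) else if 0 < d then exp (-d) else exp (2*d + (-δ))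
        with hg
      have hE1 : Set.EqOn g (fun d => exp (2*d + (-δ))) (Set.Iic (0:ℝ)) := by
        intro d hd
        have hd' : d ≤ 0 := hd
        simp only [hg, if_neg (not_le.2 (hd'.trans_lt hδ)), if_neg (not_lt.2 hd')]
      have hE2 : Set.EqOn g (fun d => exp (-d)) (Set.Ioc 0 δ) := by
        intro d hd
        rcases eq_or_lt_of_le hd.2 with rfl | h1
        · simp only [hg, if_pos le_rfl]
          ring_nf
        · simp only [hg, if_neg (not_le.2 h1), if_pos hd.1]
      have hE3 : Set.EqOn g (fun d => exp (-(2*d) + δ)) (Set.Ioi δ) := by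
        intro d hd
        simp only [hg, if_pos (Set.mem_Ioi.1 hd).le]
      have hae : (fun d => Kker δ d) =ᵐ[volume] g := by
        have h0 : (volume : Measure ℝ) {(0:ℝ)} = 0 := measure_singleton 0
        filter_upwards [compl_mem_ae_iff.2 h0] with d hd
        simp only [Set.mem_compl_iff, Set.mem_singleton_iff] at hd
        unfold Kker
        simp only [hg]
        rcases lt_trichotomy d 0 with hdlt | hdeq | hdgt
        · rw [if_pos hdlt, abs_of_neg hdlt, if_neg (not_le.2 (hdlt.trans hδ)),
            if_neg (not_le.2 (hdlt.trans hδ)), if_neg (not_lt.2 hdlt.le)]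
          ring_nf
        · exact absurd hdeq hd
        · rw [if_neg (not_lt.2 hdgt.le), if_neg (ne_of_gt hdgt), abs_of_pos hdgt]
          rcases le_or_gt δ d with h1 | h1
          · rw [if_pos h1, if_pos h1]; ring_nf
          · rw [if_neg (not_le.2 h1), if_neg (not_le.2 h1), if_pos hdgt]
      rw [integral_congr_ae hae]
      have hI1 : IntegrableOn g (Set.Iic (0:ℝ)) :=
        (intOn_Iic_aux 0 (-δ)).congr_fun (fun d hd => (hE1 hd).symm) measurableSet_Iic
      have hI2 : IntegrableOn g (Set.Ioc 0 δ) :=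
        ((Continuous.integrableOn_Ioc (by continuity : Continuous fun x : ℝ => exp (-x)))).congr_fun
          (fun d hd => (hE2 hd).symm) measurableSet_Ioc
      have hI3 : IntegrableOn g (Set.Ioi δ) :=
        (intOn_Ioi_aux δ δ).congr_fun (fun d hd => (hE3 hd).symm) measurableSet_Ioi
      have hsplit2 : Set.Ioc 0 δ ∪ Set.Ioi δ = Set.Ioi (0:ℝ) := Set.Ioc_union_Ioi_eq_Ioi hδ.le
      have hIoi : IntegrableOn g (Set.Ioi (0:ℝ)) := by
        rw [← hsplit2]; exact hI2.union hI3
      rw [← intervalIntegral.integral_Iic_add_Ioi hI1 hIoi, ← hsplit2,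
        setIntegral_union Set.Ioc_disjoint_Ioi_same measurableSet_Ioi hI2 hI3,
        setIntegral_congr_fun measurableSet_Iic hE1,
        setIntegral_congr_fun measurableSet_Ioc hE2,
        setIntegral_congr_fun measurableSet_Ioi hE3,
        int_Iic_aux, int_Ioc_exp_neg 0 δ hδ.le, int_Ioi_aux]
      have h1 : 2*(0:ℝ) + (-δ) = -δ := by ring
      have h2 : -(2*δ) + δ = -δ := by ring
      rw [h1, h2, neg_zero, exp_zero]
      ring
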